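/- For fixed matrices A ∈ ℤ^{d×n} and B ∈ ℤ^{m×n}, the cardinality and encoding length of the Graver basis of the N-fold matrix [A,B]^(N) (with N copies of B in a top row and N diagonal copies of A below) are bounded by a polynomial in N. -/

import Mathlib

set_option linter.unusedSectionVars false


/-- `z` is a Graver basis element of `D`: a nonzero integer kernel element of `D` that is
not the sum of two nonzero sign-compatible integer kernel elements. -/
def InGraver {κ ι : Type*} [Fintype κ] [Fintype ι] (D : Matrix κ ι ℤ) (z : ι → ℤ) : Prop :=
  z ≠ 0 ∧ D.mulVec z = 0 ∧
    ¬ ∃ u v : ι → ℤ, u ≠ 0 ∧ v ≠ 0 ∧ D.mulVec u = 0 ∧ D.mulVec v = 0 ∧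
      (∀ j, 0 ≤ u j * v j) ∧ z = u + v

/-- The `N`-fold matrix `[A,B]⁽ᴺ⁾`: `N` copies of `B` in a top row block and `N`
diagonal copies of `A` below. -/
def Nfold {d n m : ℕ} (A : Matrix (Fin d) (Fin n) ℤ) (B : Matrix (Fin m) (Fin n) ℤ)
    (N : ℕ) : Matrix (Fin m ⊕ Fin N × Fin d) (Fin N × Fin n) ℤ :=
  fun r c =>
    match r, c with
    | Sum.inl r, (_, j) => B r j
    | Sum.inr (i', r), (i, j) => if i' = i then A r j else 0

/-- A crude binary-free encoding length of an integer vector. -/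
def encLen {ι : Type*} [Fintype ι] (z : ι → ℤ) : ℕ := ∑ j, ((z j).natAbs + 1)



namespace NfoldAux

variable {ι : Type*} [Fintype ι]

/-- `u` is conformal to `z`: componentwise `u j` lies between `0` and `z j`. -/
def Conf (u z : ι → ℤ) : Prop := ∀ j, (0 ≤ u j ∧ u j ≤ z j) ∨ (z j ≤ u j ∧ u j ≤ 0)

/-- `u` is sign-aligned with `z`. -/
def Align (u z : ι → ℤ) : Prop :=
  ∀ j, (0 < z j → 0 ≤ u j) ∧ (z j < 0 → u j ≤ 0) ∧ (z j = 0 → u j = 0)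

/-- ℓ¹ norm. -/
def l1 (z : ι → ℤ) : ℕ := ∑ j, (z j).natAbs

theorem conf_refl (z : ι → ℤ) : Conf z z := fun j => by omega

theorem conf_trans {u v w : ι → ℤ} (h1 : Conf u v) (h2 : Conf v w) : Conf u w := by
  intro j; have := h1 j; have := h2 j; omega

theorem conf_sub {u z : ι → ℤ} (h : Conf u z) : Conf (z - u) z := by
  intro j; have := h j; simp only [Pi.sub_apply]; omega

theorem sign_of_conf {u z : ι → ℤ} (h : Conf u z) (j : ι) : 0 ≤ u j * (z j - u j) := by
  rcases h j with ⟨h1, h2⟩ | ⟨h1, h2⟩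
  · exact mul_nonneg h1 (by omega)
  · exact mul_nonneg_iff.mpr (Or.inr ⟨h2, by omega⟩)

theorem conf_of_sign {u v : ι → ℤ} (h : ∀ j, 0 ≤ u j * v j) : Conf u (u + v) := by
  intro j
  rcases mul_nonneg_iff.mp (h j) with ⟨h1, h2⟩ | ⟨h1, h2⟩ <;> simp only [Pi.add_apply] <;> omega

theorem l1_eq_zero {z : ι → ℤ} : l1 z = 0 ↔ z = 0 := by
  constructor
  · intro h; funext j
    rw [l1, Finset.sum_eq_zero_iff] at h
    have := h j (Finset.mem_univ j); simpa [Int.natAbs_eq_zero] using this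
  · rintro rfl; simp [l1]

theorem l1_add_conf {u z : ι → ℤ} (h : Conf u z) : l1 u + l1 (z - u) = l1 z := by
  rw [l1, l1, l1, ← Finset.sum_add_distrib]
  refine Finset.sum_congr rfl fun j _ => ?_
  have := h j; simp only [Pi.sub_apply]; omega

theorem align_of_conf {u z : ι → ℤ} (h : Conf u z) : Align u z := by
  intro j; have := h j; omega

theorem align_add {u v z : ι → ℤ} (hu : Align u z) (hv : Align v z) : Align (u + v) z := by
  intro j; have := hu j; have := hv j; simp only [Pi.add_apply]; omega

theorem align_zero (z : ι → ℤ) : Align 0 z := by intro j; simp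

theorem l1_add_align {u v z : ι → ℤ} (hu : Align u z) (hv : Align v z) :
    l1 (u + v) = l1 u + l1 v := by
  rw [l1, l1, l1, ← Finset.sum_add_distrib]
  refine Finset.sum_congr rfl fun j _ => ?_
  have h1 := hu j; have h2 := hv j; simp only [Pi.add_apply]
  rcases lt_trichotomy (z j) 0 with h | h | h <;> omega

theorem conf_of_align_add {u v z : ι → ℤ} (hu : Align u z) (hv : Align v z)
    (h : u + v = z) : Conf u z := by
  intro j
  have h1 := hu j; have h2 := hv j
  have h3 : u j + v j = z j := by rw [← h]; simp
  rcases lt_trichotomy (z j) 0 with hc | hc | hc <;> omega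

section Graver

variable {κ : Type*} [Fintype κ]

theorem inGraver_iff (D : Matrix κ ι ℤ) (z : ι → ℤ) :
    InGraver D z ↔ z ≠ 0 ∧ D.mulVec z = 0 ∧
      ∀ u, u ≠ 0 → u ≠ z → D.mulVec u = 0 → ¬ Conf u z := by
  constructor
  · rintro ⟨hz, hker, hind⟩
    refine ⟨hz, hker, fun u hu0 huz hk hc => hind ⟨u, z - u, hu0, ?_, hk, ?_, ?_, by abel⟩⟩
    · intro h; apply huz; have : z - u = 0 := h; funext j
      have := congrFun this j; simp only [Pi.sub_apply, Pi.zero_apply] at this ⊢; omega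
    · rw [show z - u = z - u from rfl]; simp only [Matrix.mulVec_sub, hker, hk, sub_zero]
    · exact sign_of_conf hc
  · rintro ⟨hz, hker, hmin⟩
    refine ⟨hz, hker, ?_⟩
    rintro ⟨u, v, hu0, hv0, hku, hkv, hsgn, rfl⟩
    refine hmin u hu0 ?_ hku (conf_of_sign hsgn)
    intro h
    apply hv0
    have : u + v = u := by rw [← h]
    funext j; have := congrFun this j; simp only [Pi.add_apply] at this
    simp only [Pi.zero_apply]; omega

/-- An antichain in `ι → ℕ` is finite (Dickson's lemma). -/
theorem antichain_finite {σ : Type*} [Finite σ] (S : Set (σ → ℕ))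
    (h : ∀ u ∈ S, ∀ v ∈ S, u ≤ v → u = v) : S.Finite := by
  have hpwo : S.IsPWO :=
    Set.isPWO_of_wellQuasiOrderedLE S
  refine IsAntichain.finite_of_partiallyWellOrderedOn ?_ hpwo
  intro u hu v hv hne hle
  exact hne (h u hu v hv hle)

/-- The Graver basis of any integer matrix is finite. -/
theorem graver_finite (D : Matrix κ ι ℤ) : {z | InGraver D z}.Finite := by
  classical
  set φ : (ι → ℤ) → ((ι ⊕ ι) → ℕ) :=
    fun z => Sum.elim (fun j => (z j).toNat) (fun j => (-z j).toNat) with hφ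
  have hφinj : Function.Injective φ := by
    intro a b hab
    funext j
    have h1 := congrFun hab (Sum.inl j)
    have h2 := congrFun hab (Sum.inr j)
    simp only [hφ, Sum.elim_inl, Sum.elim_inr] at h1 h2
    omega
  have hconf : ∀ a b : ι → ℤ, φ a ≤ φ b → Conf a b := by
    intro a b hab j
    have h1 := hab (Sum.inl j)
    have h2 := hab (Sum.inr j)
    simp only [hφ, Sum.elim_inl, Sum.elim_inr] at h1 h2
    omega
  have : (φ '' {z | InGraver D z}).Finite := by
    refine antichain_finite _ ?_
    rintro _ ⟨u, hu, rfl⟩ _ ⟨v, hv, rfl⟩ hle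
    by_contra hne
    have huv : u ≠ v := fun h => hne (by rw [h])
    simp only [Set.mem_setOf_eq, inGraver_iff] at hu hv
    exact hv.2.2 u hu.1 huv hu.2.1 (hconf u v hle)
  exact Set.Finite.of_finite_image this (hφinj.injOn)

/-- Conformal decomposition of kernel elements into Graver elements. -/
theorem exists_decomp (D : Matrix κ ι ℤ) (x : ι → ℤ) (hx : D.mulVec x = 0) :
    ∃ L : Multiset (ι → ℤ), (∀ p ∈ L, InGraver D p ∧ Conf p x) ∧ L.sum = x := by
  generalize hc : l1 x = c
  induction c using Nat.strong_induction_on generalizing x with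
  | _ c ih =>
    by_cases hx0 : x = 0
    · exact ⟨0, by simp, by simp [hx0]⟩
    by_cases hg : InGraver D x
    · exact ⟨{x}, by simpa using ⟨hg, conf_refl x⟩, by simp⟩
    · rw [inGraver_iff] at hg
      push_neg at hg
      obtain ⟨u, hu0, hux, hku, hcu⟩ := hg hx0 hx
      have hkv : D.mulVec (x - u) = 0 := by
        simp only [Matrix.mulVec_sub, hx, hku, sub_zero]
      have hv0 : x - u ≠ 0 := by
        intro h; apply hux; funext j
        have := congrFun h j; simp only [Pi.sub_apply, Pi.zero_apply] at this; omega
      have hl1 : l1 u + l1 (x - u) = l1 x := l1_add_conf hcu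
      have hu1 : 0 < l1 u := Nat.pos_of_ne_zero (fun h => hu0 (l1_eq_zero.mp h))
      have hv1 : 0 < l1 (x - u) := Nat.pos_of_ne_zero (fun h => hv0 (l1_eq_zero.mp h))
      obtain ⟨L1, hL1, hs1⟩ := ih (l1 u) (by omega) u hku rfl
      obtain ⟨L2, hL2, hs2⟩ := ih (l1 (x - u)) (by omega) (x - u) hkv rfl
      refine ⟨L1 + L2, ?_, by simp [hs1, hs2]⟩
      intro p hp
      rcases Multiset.mem_add.mp hp with h | h
      · exact ⟨(hL1 p h).1, conf_trans (hL1 p h).2 hcu⟩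
      · exact ⟨(hL2 p h).1, conf_trans (hL2 p h).2 (conf_sub hcu)⟩

end Graver

section MultisetLemmas

variable {κ : Type*} [Fintype κ]

theorem sum_apply_ms (L : Multiset (ι → ℤ)) (j : ι) :
    L.sum j = (L.map (fun p => p j)).sum := by
  induction L using Multiset.induction_on with
  | empty => simp
  | cons p L ih => simp [ih]

theorem align_sum {z : ι → ℤ} (L : Multiset (ι → ℤ)) (h : ∀ p ∈ L, Align p z) :
    Align L.sum z := by
  induction L using Multiset.induction_on with
  | empty => simpa using align_zero z
  | cons p L ih =>
    rw [Multiset.sum_cons]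
    exact align_add (h p (Multiset.mem_cons_self p L))
      (ih fun q hq => h q (Multiset.mem_cons_of_mem hq))

theorem l1_sum {z : ι → ℤ} (L : Multiset (ι → ℤ)) (h : ∀ p ∈ L, Align p z) :
    l1 L.sum = (L.map l1).sum := by
  induction L using Multiset.induction_on with
  | empty => simp [l1_eq_zero]
  | cons p L ih =>
    rw [Multiset.sum_cons, Multiset.map_cons, Multiset.sum_cons,
      l1_add_align (h p (Multiset.mem_cons_self p L))
        (align_sum L fun q hq => h q (Multiset.mem_cons_of_mem hq)),
      ih fun q hq => h q (Multiset.mem_cons_of_mem hq)]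

theorem mulVec_multiset_sum (D : Matrix κ ι ℤ) (L : Multiset (ι → ℤ)) :
    D.mulVec L.sum = (L.map (fun p => D.mulVec p)).sum := by
  induction L using Multiset.induction_on with
  | empty => simp [Matrix.mulVec_zero]
  | cons p L ih => simp [Matrix.mulVec_add, ih]

/-- Extraction of a sub-multiset with prescribed counts of images. -/
theorem exists_submultiset {α β : Type*} [DecidableEq α] (f : β → α) (P : Multiset β) :
    ∀ w : α → ℕ, (∀ a, w a ≤ (P.map f).count a) →
      ∃ Q, Q ≤ P ∧ ∀ a, ((Q.map f).count a = w a) := by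
  induction P using Multiset.induction_on with
  | empty =>
    intro w hw
    refine ⟨0, le_refl _, fun a => ?_⟩
    have := hw a; simp at this ⊢; omega
  | cons p P ih =>
    intro w hw
    by_cases h0 : w (f p) = 0
    · obtain ⟨Q, hQ, hc⟩ := ih w (fun a => by
        have := hw a
        rw [Multiset.map_cons, Multiset.count_cons] at this
        rcases eq_or_ne a (f p) with rfl | hne
        · rw [if_pos rfl] at this; omega
        · rw [if_neg hne] at this; exact this)
      exact ⟨Q, le_trans hQ (Multiset.le_cons_self P p), hc⟩
    · classical
      obtain ⟨Q, hQ, hc⟩ := ih (Function.update w (f p) (w (f p) - 1)) (fun a => by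
        have := hw a
        rw [Multiset.map_cons, Multiset.count_cons] at this
        rcases eq_or_ne a (f p) with rfl | hne
        · rw [if_pos rfl] at this; simp only [Function.update_self]; omega
        · rw [if_neg hne] at this; simpa [Function.update_of_ne hne] using this)
      refine ⟨p ::ₘ Q, Multiset.cons_le_cons p hQ, fun a => ?_⟩
      have := hc a
      rw [Multiset.map_cons, Multiset.count_cons]
      rcases eq_or_ne a (f p) with rfl | hne
      · simp only [Function.update_self] at this; simp [this]; omega
      · simp only [Function.update_of_ne hne] at this; simpa [hne] using this

end MultisetLemmas

section NfoldComp

variable {d n m N : ℕ} (A : Matrix (Fin d) (Fin n) ℤ) (B : Matrix (Fin m) (Fin n) ℤ)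

theorem nfold_mulVec_inl (z : Fin N × Fin n → ℤ) (r : Fin m) :
    (Nfold A B N).mulVec z (Sum.inl r) = ∑ i, B.mulVec (fun j => z (i, j)) r := by
  simp only [Matrix.mulVec, dotProduct, Nfold, Fintype.sum_prod_type]

theorem nfold_mulVec_inr (z : Fin N × Fin n → ℤ) (i : Fin N) (r : Fin d) :
    (Nfold A B N).mulVec z (Sum.inr (i, r)) = A.mulVec (fun j => z (i, j)) r := by
  simp only [Matrix.mulVec, dotProduct, Nfold, Fintype.sum_prod_type, ite_mul, zero_mul]
  rw [Finset.sum_eq_single i]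
  · simp
  · intro b _ hb; simp [Ne.symm hb]
  · simp

/-- The embedding of a brick-indexed piece into the full space. -/
def emb {n N : ℕ} (q : Fin N × (Fin n → ℤ)) : Fin N × Fin n → ℤ :=
  fun c => if q.1 = c.1 then q.2 c.2 else 0

theorem l1_emb (q : Fin N × (Fin n → ℤ)) : l1 (emb q) = l1 q.2 := by
  classical
  simp only [l1, emb, Fintype.sum_prod_type]
  rw [Finset.sum_eq_single q.1]
  · simp
  · intro b _ hb; simp [Ne.symm hb]
  · simp

theorem align_emb {z : Fin N × Fin n → ℤ} {i : Fin N} {p : Fin n → ℤ}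
    (h : Conf p (fun j => z (i, j))) : Align (emb (i, p)) z := by
  rintro ⟨i', j⟩
  simp only [emb]
  by_cases hi : i = i'
  · subst hi; simpa using (align_of_conf h) j
  · simp [hi]

theorem nfold_mulVec_emb (i : Fin N) (p : Fin n → ℤ) (hp : A.mulVec p = 0) :
    (Nfold A B N).mulVec (emb (i, p)) = Sum.elim (B.mulVec p) 0 := by
  funext r
  rcases r with r | ⟨i', r⟩
  · rw [nfold_mulVec_inl]
    rw [Finset.sum_eq_single i]
    · simp [emb]
    · intro b _ hb
      have : (fun j => emb (i, p) (b, j)) = (0 : Fin n → ℤ) := by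
        funext j; simp [emb, Ne.symm hb]
      rw [this, Matrix.mulVec_zero]; simp
    · simp
  · rw [nfold_mulVec_inr]
    by_cases hi : i = i'
    · subst hi
      have : (fun j => emb (i, p) (i, j)) = p := by funext j; simp [emb]
      rw [this, hp]; simp
    · have : (fun j => emb (i, p) (i', j)) = (0 : Fin n → ℤ) := by
        funext j; simp [emb, hi]
      rw [this, Matrix.mulVec_zero]; simp

end NfoldComp

section Key

variable {d n m : ℕ} (A : Matrix (Fin d) (Fin n) ℤ) (B : Matrix (Fin m) (Fin n) ℤ)

theorem sum_map_eq_sum_count {α M : Type*} [DecidableEq α] [AddCommMonoid M]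
    (s : Finset α) (R : Multiset α) (hm : ∀ a ∈ R, a ∈ s) (f : α → M) :
    (R.map f).sum = ∑ a ∈ s, R.count a • f a := by
  rw [Finset.sum_multiset_map_count]
  refine Finset.sum_subset (fun a ha => hm a (Multiset.mem_toFinset.mp ha)) ?_
  intro a _ ha
  rw [Multiset.count_eq_zero_of_notMem (fun h => ha (Multiset.mem_toFinset.mpr h)), zero_smul]

theorem map_bigP {γ : Type*} {N : ℕ}
    (L : Fin N → Multiset (Fin n → ℤ)) (f : Fin N × (Fin n → ℤ) → γ) :
    (∑ i, (L i).map (fun p => (i, p))).map f = ∑ i, (L i).map (fun p => f (i, p)) := by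
  rw [show (Multiset.map f) = ⇑(Multiset.mapAddMonoidHom f) from rfl, map_sum]
  simp [Multiset.map_map, Function.comp_def]

theorem sum_bigP {γ : Type*} [AddCommMonoid γ] {N : ℕ} (F : Fin N → Multiset γ) :
    (∑ i, F i).sum = ∑ i, (F i).sum := by
  rw [show (Multiset.sum : Multiset γ → γ) = ⇑(Multiset.sumAddMonoidHom) from rfl, map_sum]

theorem vQ_mulVec {N : ℕ} (Q : Multiset (Fin N × (Fin n → ℤ)))
    (hQ : ∀ q ∈ Q, A.mulVec q.2 = 0) :
    (Nfold A B N).mulVec (Q.map emb).sum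
      = Sum.elim ((Q.map (fun q => B.mulVec q.2)).sum) 0 := by
  induction Q using Multiset.induction_on with
  | empty =>
    simp only [Multiset.map_zero, Multiset.sum_zero, Matrix.mulVec_zero]
    funext r; cases r <;> simp
  | cons q Q ih =>
    rw [Multiset.map_cons, Multiset.sum_cons, Matrix.mulVec_add, Multiset.map_cons,
      Multiset.sum_cons, ih (fun p hp => hQ p (Multiset.mem_cons_of_mem hp)),
      nfold_mulVec_emb A B q.1 q.2 (hQ q (Multiset.mem_cons_self q Q))]
    funext r; cases r <;> simp

theorem key : ∃ c g₀ : ℕ, ∀ (N : ℕ) (z : Fin N × Fin n → ℤ), InGraver (Nfold A B N) z →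
    l1 z ≤ c ∧ (Finset.univ.filter (fun i : Fin N => ∃ j, z (i, j) ≠ 0)).card ≤ g₀ := by
  classical
  set Γ : Finset (Fin n → ℤ) := (graver_finite A).toFinset with hΓdef
  have hΓ : ∀ x, x ∈ Γ ↔ InGraver A x := fun x => Set.Finite.mem_toFinset _
  set M : ℕ := Γ.sup l1 with hMdef
  set ex : (↥Γ → ℕ) → ((Fin n → ℤ) → ℕ) :=
    fun v x => if h : x ∈ Γ then v ⟨x, h⟩ else 0 with hexdef
  set Cv : (↥Γ → ℕ) → Prop :=
    fun v => ∑ g ∈ Γ, (ex v g) • B.mulVec g = 0 with hCvdef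
  set HS : Set (↥Γ → ℕ) := {v | v ≠ 0 ∧ Cv v ∧ ∀ w, w ≠ 0 → Cv w → w ≤ v → w = v}
    with hHSdef
  have hHSfin : HS.Finite :=
    antichain_finite _ (fun u hu v hv hle => hv.2.2 u hu.1 hu.2.1 hle)
  set g₀ : ℕ := hHSfin.toFinset.sup (fun v => ∑ g, v g) with hg₀def
  clear_value M g₀
  refine ⟨g₀ * M, g₀, ?_⟩
  intro N z hz
  have hz0 := hz.1
  have hker := hz.2.1
  have hmin := ((inGraver_iff _ _).mp hz).2.2
  have hbk : ∀ i : Fin N, A.mulVec (fun j => z (i, j)) = 0 := by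
    intro i; funext r
    have h := congrFun hker (Sum.inr (i, r))
    rw [nfold_mulVec_inr] at h
    simpa using h
  choose L hL hLsum using fun i => exists_decomp A (fun j => z (i, j)) (hbk i)
  set P : Multiset (Fin N × (Fin n → ℤ)) := ∑ i, (L i).map (fun p => (i, p)) with hPdef
  have hPmem : ∀ q ∈ P, q.2 ∈ L q.1 := by
    intro q hq
    obtain ⟨i, _, hq⟩ := Multiset.mem_sum.mp hq
    obtain ⟨p, hp, rfl⟩ := Multiset.mem_map.mp hq
    exact hp
  have hPg : ∀ q ∈ P, InGraver A q.2 := fun q hq => (hL q.1 q.2 (hPmem q hq)).1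
  have hPc : ∀ q ∈ P, Conf q.2 (fun j => z (q.1, j)) := fun q hq => (hL q.1 q.2 (hPmem q hq)).2
  have hPΓ : ∀ q ∈ P, q.2 ∈ Γ := fun q hq => (hΓ _).mpr (hPg q hq)
  have hPker : ∀ q ∈ P, A.mulVec q.2 = 0 := fun q hq => (hPg q hq).2.1
  -- `z` is the sum of the embedded pieces
  have hvec : (P.map emb).sum = z := by
    funext c
    obtain ⟨i, j⟩ := c
    rw [sum_apply_ms, Multiset.map_map, hPdef, map_bigP, sum_bigP]
    rw [Finset.sum_eq_single i]
    · have h1 : ((L i).map (fun p => ((fun p => p (i, j)) ∘ emb) (i, p))).sum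
          = ((L i).map (fun p => p j)).sum := by
        congr 1
        refine Multiset.map_congr rfl fun p _ => ?_
        simp [emb]
      rw [h1, ← sum_apply_ms, hLsum i]
    · intro b _ hb
      have h1 : ((L b).map (fun p => ((fun p => p (i, j)) ∘ emb) (b, p)))
          = (L b).map (fun _ => (0 : ℤ)) := by
        refine Multiset.map_congr rfl fun p _ => ?_
        simp [emb, hb]
      rw [h1]
      simp
    · simp
  -- alignment of partial sums
  have halign : ∀ Q : Multiset (Fin N × (Fin n → ℤ)), Q ≤ P → Align (Q.map emb).sum z := by
    intro Q hQ
    refine align_sum _ ?_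
    intro p hp
    obtain ⟨q, hq, rfl⟩ := Multiset.mem_map.mp hp
    exact align_emb (hPc q (Multiset.mem_of_le hQ hq))
  -- l1 of partial sums
  have hl1 : ∀ Q : Multiset (Fin N × (Fin n → ℤ)), Q ≤ P →
      l1 (Q.map emb).sum = (Q.map (fun q => l1 q.2)).sum := by
    intro Q hQ
    rw [l1_sum]
    · rw [Multiset.map_map]
      congr 1
      exact Multiset.map_congr rfl fun q _ => l1_emb q
    · intro p hp
      obtain ⟨q, hq, rfl⟩ := Multiset.mem_map.mp hp
      exact align_emb (hPc q (Multiset.mem_of_le hQ hq))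
  -- the count vector of `P`
  set R : Multiset (Fin n → ℤ) := P.map Prod.snd with hRdef
  have hRΓ : ∀ x ∈ R, x ∈ Γ := by
    intro x hx
    obtain ⟨q, hq, rfl⟩ := Multiset.mem_map.mp hx
    exact hPΓ q hq
  set v : ↥Γ → ℕ := fun g => R.count ↑g with hvdef
  -- B-part sums via counts
  have hBsum : ∀ Q : Multiset (Fin N × (Fin n → ℤ)), Q ≤ P →
      (Q.map (fun q => B.mulVec q.2)).sum = ∑ g ∈ Γ, ((Q.map Prod.snd).count g) • B.mulVec g := by
    intro Q hQ
    have : Q.map (fun q => B.mulVec q.2) = (Q.map Prod.snd).map (fun x => B.mulVec x) := by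
      rw [Multiset.map_map]; rfl
    rw [this]
    exact sum_map_eq_sum_count Γ _ (fun a ha => by
      obtain ⟨q, hq, rfl⟩ := Multiset.mem_map.mp ha
      exact hPΓ q (Multiset.mem_of_le hQ hq)) _
  -- `v` satisfies the homogeneous condition
  have hCv : Cv v := by
    have h1 := vQ_mulVec A B P hPker
    rw [hvec, hker] at h1
    have h2 : ((P.map fun q => B.mulVec q.2)).sum = 0 := by
      funext r
      have := congrFun h1.symm (Sum.inl r)
      simpa using this
    rw [hBsum P le_rfl] at h2
    rw [hCvdef]
    simp only
    rw [← h2]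
    refine Finset.sum_congr rfl fun g hg => ?_
    rw [hexdef]
    simp only
    rw [dif_pos hg]
  -- `v` is nonzero
  have hP0 : P ≠ 0 := by
    intro h
    apply hz0
    rw [← hvec, h]
    simp
  have hv0 : v ≠ 0 := by
    obtain ⟨q, hq⟩ := Multiset.exists_mem_of_ne_zero hP0
    intro h
    have hmem : q.2 ∈ R := Multiset.mem_map_of_mem _ hq
    have : R.count q.2 ≠ 0 := by
      rw [Multiset.count_ne_zero]
      exact hmem
    exact this (congrFun h ⟨q.2, hPΓ q hq⟩)
  -- minimality of `v`
  have hvmin : ∀ w, w ≠ 0 → Cv w → w ≤ v → w = v := by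
    intro w hw0 hCw hwv
    by_contra hne
    obtain ⟨Q, hQle, hQc⟩ := exists_submultiset Prod.snd P (ex w) (fun a => by
      rw [hexdef]
      simp only
      split
      · next h => exact hwv ⟨a, h⟩
      · exact Nat.zero_le _)
    set u : Fin N × Fin n → ℤ := (Q.map emb).sum with hudef
    set u' : Fin N × Fin n → ℤ := ((P - Q).map emb).sum with hu'def
    have hPQ : Q + (P - Q) = P := by
      rw [add_comm]; exact tsub_add_cancel_of_le hQle
    have hQ'le : P - Q ≤ P := tsub_le_self
    have huu' : u + u' = z := by
      simp only [hudef, hu'def]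
      rw [← Multiset.sum_add, ← Multiset.map_add, hPQ, hvec]
    have hQker : ∀ q ∈ Q, A.mulVec q.2 = 0 := fun q hq => hPker q (Multiset.mem_of_le hQle hq)
    have hukernel : (Nfold A B N).mulVec u = 0 := by
      simp only [hudef]
      rw [vQ_mulVec A B Q hQker, hBsum Q hQle]
      have hc : ∀ g ∈ Γ, ((Q.map Prod.snd).count g) • B.mulVec g = (ex w g) • B.mulVec g :=
        fun g _ => by rw [hQc g]
      rw [Finset.sum_congr rfl hc]
      have hCw' := hCw
      rw [hCvdef] at hCw'
      rw [hCw']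
      funext r; cases r <;> simp
    obtain ⟨g1, hg1⟩ : ∃ g, w g ≠ 0 := by
      by_contra hc; push_neg at hc; exact hw0 (funext hc)
    have hcnt : ((Q.map Prod.snd).count ↑g1) = w g1 := by
      rw [hQc]; simp [hexdef]
    have hmemQ : (↑g1 : Fin n → ℤ) ∈ Q.map Prod.snd := by
      rw [← Multiset.count_pos, hcnt]
      exact Nat.pos_of_ne_zero hg1
    obtain ⟨q1, hq1, -⟩ := Multiset.mem_map.mp hmemQ
    have hu0 : u ≠ 0 := by
      intro h
      have h1 : l1 u = 0 := by rw [h]; exact l1_eq_zero.mpr rfl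
      simp only [hudef] at h1
      rw [hl1 Q hQle] at h1
      have hq1ne : q1.2 ≠ 0 := (hPg q1 (Multiset.mem_of_le hQle hq1)).1
      have hpos : 0 < l1 q1.2 := by
        rcases Nat.eq_zero_or_pos (l1 q1.2) with h' | h'
        · exact absurd (l1_eq_zero.mp h') hq1ne
        · exact h'
      have hle1 : l1 q1.2 ≤ (Q.map (fun q => l1 q.2)).sum :=
        Multiset.single_le_sum (fun x _ => Nat.zero_le x) _ (Multiset.mem_map_of_mem _ hq1)
      rw [h1] at hle1
      exact absurd (Nat.le_zero.mp hle1) hpos.ne'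
    have hQP : Q ≠ P := by
      intro h
      apply hne
      funext g
      have hcg := hQc ↑g
      rw [h] at hcg
      simp only [hexdef] at hcg
      rw [dif_pos g.2] at hcg
      simpa using hcg.symm
    have hPQne : P - Q ≠ 0 := by
      intro h
      apply hQP
      rwa [h, add_zero] at hPQ
    obtain ⟨q2, hq2⟩ := Multiset.exists_mem_of_ne_zero hPQne
    have hu'0 : u' ≠ 0 := by
      intro h
      have h1 : l1 u' = 0 := by rw [h]; exact l1_eq_zero.mpr rfl
      simp only [hu'def] at h1
      rw [hl1 _ hQ'le] at h1
      have hq2ne : q2.2 ≠ 0 := (hPg q2 (Multiset.mem_of_le hQ'le hq2)).1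
      have hpos : 0 < l1 q2.2 := by
        rcases Nat.eq_zero_or_pos (l1 q2.2) with h' | h'
        · exact absurd (l1_eq_zero.mp h') hq2ne
        · exact h'
      have hle1 : l1 q2.2 ≤ ((P - Q).map (fun q => l1 q.2)).sum :=
        Multiset.single_le_sum (fun x _ => Nat.zero_le x) _ (Multiset.mem_map_of_mem _ hq2)
      rw [h1] at hle1
      exact absurd (Nat.le_zero.mp hle1) hpos.ne'
    have huz : u ≠ z := by
      intro h
      apply hu'0
      have h2 : u + u' = u := by rw [huu', h]
      funext c
      have h3 := congrFun h2 c
      simp only [Pi.add_apply] at h3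
      simp only [Pi.zero_apply]
      linarith
    have hconf : Conf u z := conf_of_align_add (halign Q hQle) (halign _ hQ'le) huu'
    exact hmin u hu0 huz hukernel hconf
  -- conclusion
  have hvHS : v ∈ hHSfin.toFinset := (Set.Finite.mem_toFinset _).mpr ⟨hv0, hCv, hvmin⟩
  have hvle : ∑ g, v g ≤ g₀ := hg₀def ▸ Finset.le_sup (f := fun v => ∑ g, v g) hvHS
  have hcardP : Multiset.card P = ∑ g : ↥Γ, v g := by
    have h1 : Multiset.card P = Multiset.card R := (Multiset.card_map _ _).symm
    rw [h1, ← Multiset.sum_count_eq_card (s := Γ) hRΓ,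
      ← Finset.sum_coe_sort Γ (fun g => R.count g)]
  constructor
  · have h1 : l1 z = (P.map (fun q => l1 q.2)).sum := by
      conv_lhs => rw [← hvec]
      exact hl1 P le_rfl
    have h2 : (P.map (fun q => l1 q.2)).sum ≤ Multiset.card (P.map (fun q => l1 q.2)) • M := by
      refine Multiset.sum_le_card_nsmul _ _ ?_
      intro x hx
      obtain ⟨q, hq, rfl⟩ := Multiset.mem_map.mp hx
      exact hMdef ▸ Finset.le_sup (f := l1) (hPΓ q hq)
    rw [Multiset.card_map, smul_eq_mul] at h2
    have h3 : Multiset.card P ≤ g₀ := hcardP ▸ hvle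
    calc l1 z = (P.map (fun q => l1 q.2)).sum := h1
      _ ≤ Multiset.card P * M := h2
      _ ≤ g₀ * M := Nat.mul_le_mul_right M h3
  · have hsub : Finset.univ.filter (fun i : Fin N => ∃ j, z (i, j) ≠ 0)
        ⊆ (P.map Prod.fst).toFinset := by
      intro i hi
      rw [Finset.mem_filter] at hi
      obtain ⟨-, j, hj⟩ := hi
      have hbne : L i ≠ 0 := by
        intro h
        apply hj
        have hs := hLsum i
        rw [h] at hs
        simp only [Multiset.sum_zero] at hs
        exact (congrFun hs.symm j)
      obtain ⟨p, hp⟩ := Multiset.exists_mem_of_ne_zero hbne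
      rw [Multiset.mem_toFinset]
      refine Multiset.mem_map.mpr ⟨(i, p), ?_, rfl⟩
      exact Multiset.mem_sum.mpr ⟨i, Finset.mem_univ i, Multiset.mem_map_of_mem _ hp⟩
    calc (Finset.univ.filter (fun i : Fin N => ∃ j, z (i, j) ≠ 0)).card
        ≤ (P.map Prod.fst).toFinset.card := Finset.card_le_card hsub
      _ ≤ Multiset.card (P.map Prod.fst) := Multiset.toFinset_card_le _
      _ = Multiset.card P := Multiset.card_map _ _
      _ ≤ g₀ := hcardP ▸ hvle

end Key

end NfoldAux

open NfoldAux in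
/-- For fixed `A`, `B`, the cardinality and total encoding length of the Graver basis
of `[A,B]⁽ᴺ⁾` are bounded by a polynomial in `N`. -/
theorem nfold_graver_polynomial_bound
    (d n m : ℕ) (A : Matrix (Fin d) (Fin n) ℤ) (B : Matrix (Fin m) (Fin n) ℤ) :
    ∃ p : Polynomial ℕ, ∀ N : ℕ,
      ∃ G : Finset ((Fin N × Fin n) → ℤ),
        (↑G = {z : (Fin N × Fin n) → ℤ | InGraver (Nfold A B N) z}) ∧
        G.card ≤ p.eval N ∧ (∑ z ∈ G, encLen z) ≤ p.eval N := by
  classical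
  obtain ⟨c, g₀, hkey⟩ := key A B
  set K : Finset (Fin n → ℤ) := Fintype.piFinset (fun _ : Fin n => Finset.Icc (-(c : ℤ)) c)
    with hKdef
  refine ⟨(Polynomial.C K.card * Polynomial.X) ^ g₀ *
    (Polynomial.C c + Polynomial.C n * Polynomial.X + 1), ?_⟩
  intro N
  have heval : ((Polynomial.C K.card * Polynomial.X) ^ g₀ *
      (Polynomial.C c + Polynomial.C n * Polynomial.X + 1)).eval N
      = (K.card * N) ^ g₀ * (c + n * N + 1) := by
    simp [Polynomial.eval_mul, Polynomial.eval_pow, Polynomial.eval_add]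
  have hGfin : {z : Fin N × Fin n → ℤ | InGraver (Nfold A B N) z}.Finite := graver_finite _
  have hcard : hGfin.toFinset.card ≤ (K.card * N) ^ g₀ := by
    set Φ : (Fin g₀ → Fin N × ↥K) → (Fin N × Fin n → ℤ) :=
      fun f q => if h : ∃ t, (f t).1 = q.1 then ((f (Classical.choose h)).2 : Fin n → ℤ) q.2
        else 0 with hΦdef
    have hsub : hGfin.toFinset ⊆ Finset.image Φ Finset.univ := by
      intro z hzmem
      have hz : InGraver (Nfold A B N) z := hGfin.mem_toFinset.mp hzmem
      obtain ⟨hl1z, hsupp⟩ := hkey N z hz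
      have hK : ∀ i : Fin N, (fun j => z (i, j)) ∈ K := by
        intro i
        rw [hKdef, Fintype.mem_piFinset]
        intro j
        have h1 : (z (i, j)).natAbs ≤ l1 z :=
          Finset.single_le_sum (f := fun q => (z q).natAbs)
            (fun q _ => Nat.zero_le _) (Finset.mem_univ (i, j))
        rw [Finset.mem_Icc]
        omega
      set S : Finset (Fin N) := Finset.univ.filter (fun i : Fin N => ∃ j, z (i, j) ≠ 0)
        with hSdef
      have hS0 : S.Nonempty := by
        obtain ⟨q, hq⟩ := Function.ne_iff.mp hz.1
        exact ⟨q.1, by rw [hSdef]; simp only [Finset.mem_filter]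
                       exact ⟨Finset.mem_univ _, q.2, hq⟩⟩
      have hlen : S.toList.length = S.card := Finset.length_toList S
      have hlpos : 0 < S.toList.length := by
        rw [hlen]; exact Finset.card_pos.mpr hS0
      set σ : Fin g₀ → Fin N := fun t =>
        if h : (t : ℕ) < S.toList.length then S.toList.get ⟨t, h⟩ else S.toList.get ⟨0, hlpos⟩
        with hσdef
      have hσS : ∀ t, σ t ∈ S := by
        intro t
        rw [hσdef]
        simp only
        split <;> exact Finset.mem_toList.mp (List.get_mem _ _)
      have hσsurj : ∀ i ∈ S, ∃ t : Fin g₀, σ t = i := by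
        intro i hi
        obtain ⟨k, hk⟩ := List.mem_iff_get.mp (Finset.mem_toList.mpr hi)
        have hklt : (k : ℕ) < g₀ := lt_of_lt_of_le (hlen ▸ k.2) hsupp
        refine ⟨⟨k, hklt⟩, ?_⟩
        rw [hσdef]
        simp only
        rw [dif_pos (show ((⟨(k : ℕ), hklt⟩ : Fin g₀) : ℕ) < S.toList.length from k.2)]
        rw [← hk]
      set f : Fin g₀ → Fin N × ↥K := fun t => (σ t, ⟨fun j => z (σ t, j), hK (σ t)⟩) with hfdef
      refine Finset.mem_image.mpr ⟨f, Finset.mem_univ f, ?_⟩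
      funext q
      obtain ⟨i, j⟩ := q
      rw [hΦdef]
      simp only
      by_cases hex : ∃ t, (f t).1 = i
      · rw [dif_pos hex]
        have hspec : σ (Classical.choose hex) = i := Classical.choose_spec hex
        show z (σ (Classical.choose hex), j) = z (i, j)
        rw [hspec]
      · rw [dif_neg hex]
        have hiS : i ∉ S := by
          intro hiS
          obtain ⟨t, ht⟩ := hσsurj i hiS
          exact hex ⟨t, ht⟩
        rw [hSdef] at hiS
        simp only [Finset.mem_filter, Finset.mem_univ, true_and, not_exists, not_not] at hiS
        exact (hiS j).symm
    calc hGfin.toFinset.card ≤ (Finset.image Φ Finset.univ).card := Finset.card_le_card hsub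
      _ ≤ (Finset.univ : Finset (Fin g₀ → Fin N × ↥K)).card := Finset.card_image_le
      _ = (N * K.card) ^ g₀ := by
          rw [Finset.card_univ, Fintype.card_fun]
          simp [Fintype.card_prod]
      _ = (K.card * N) ^ g₀ := by rw [Nat.mul_comm]
  have henc : ∀ z ∈ hGfin.toFinset, encLen z ≤ c + N * n := by
    intro z hzmem
    have hz : InGraver (Nfold A B N) z := hGfin.mem_toFinset.mp hzmem
    obtain ⟨hl1z, -⟩ := hkey N z hz
    have : encLen z = l1 z + N * n := by
      rw [encLen, Finset.sum_add_distrib, Finset.sum_const, Finset.card_univ]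
      simp [l1, Fintype.card_prod]
    omega
  refine ⟨hGfin.toFinset, hGfin.coe_toFinset, ?_, ?_⟩
  · rw [heval]
    exact le_trans hcard (Nat.le_mul_of_pos_right _ (by omega))
  · rw [heval]
    calc ∑ z ∈ hGfin.toFinset, encLen z
        ≤ hGfin.toFinset.card • (c + N * n) := Finset.sum_le_card_nsmul _ _ _ henc
      _ = hGfin.toFinset.card * (c + N * n) := smul_eq_mul _ _
      _ ≤ (K.card * N) ^ g₀ * (c + n * N + 1) :=
          Nat.mul_le_mul hcard (by rw [Nat.mul_comm N n]; omega)
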